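/- For every Dyck word D, the number of centered tunnels of D equals the number of hills of Ψ(D): ct(D) = h(Ψ(D)). -/

import Mathlib

attribute [local instance] Classical.propDecidable

namespace DyckBij

/-- A word over `Bool` (`true` = up-step `u`, `false` = down-step `d`) is a Dyck word:
equally many `u`'s and `d`'s, and every prefix has at least as many `u`'s as `d`'s. -/
def IsDyck (w : List Bool) : Prop :=
  w.count false = w.count true ∧
    ∀ p : List Bool, p <+: w → p.count false ≤ p.count true

/-- `Matched w i j`: the `u` at (0-indexed) position `i` of `w` is matched (as in matched
parentheses) with the `d` at position `j`, i.e. `w = A u B d C` with `B` a Dyck word,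
`|A| = i` and `j = i + |B| + 1`. -/
def Matched (w : List Bool) (i j : ℕ) : Prop :=
  ∃ A B C : List Bool, IsDyck B ∧ w = A ++ true :: (B ++ false :: C) ∧
    A.length = i ∧ j = i + B.length + 1

/-- Positions `i` and `j` form a matched pair of steps of `w`. -/
def MatchPair (w : List Bool) (i j : ℕ) : Prop :=
  Matched w i j ∨ Matched w j i

/-- The 0-indexed reading order `σ^{(r)}` on a word of length `L`: the first `2r` positions
are read in order, and the remaining positions are read in zigzag
`2r, L-1, 2r+1, L-2, …` (0-indexed). For `r = 0` this is the zigzag order `σ`. -/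
def zigR (r L p : ℕ) : ℕ :=
  if p < 2 * r then p
  else if p % 2 = 0 then p / 2 + r
  else L + r - (p + 1) / 2

/-- The bijection `Ψ_r`: the `p`-th letter of `Ψ_r(w)` is `u` iff the match of the
`σ^{(r)}_p`-th step of `w` does not occur among the previously read steps
`σ^{(r)}_0, …, σ^{(r)}_{p-1}`. -/
noncomputable def psiR (r : ℕ) (w : List Bool) : List Bool :=
  List.ofFn fun p : Fin w.length =>
    if ∃ p' : ℕ, p' < (p : ℕ) ∧
        MatchPair w (zigR r w.length p') (zigR r w.length (p : ℕ))
    then false else true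

/-- The bijection `Ψ = Ψ_0`. -/
noncomputable def psi : List Bool → List Bool := psiR 0

/-- Number of tunnels of `w` with `|A| = |C| + 2r` (midpoint at `x = n + r`),
i.e. decompositions `w = A u B d C` with `B` a Dyck word; tunnels are indexed by `|A|`. -/
noncomputable def tunEq (r : ℕ) (w : List Bool) : ℕ :=
  {i : ℕ | ∃ A B C : List Bool, IsDyck B ∧ w = A ++ true :: (B ++ false :: C) ∧
    A.length = i ∧ A.length = C.length + 2 * r}.ncard

/-- Number of tunnels of `w` with `|A| > |C| + 2r` (midpoint in `x > n + r`). -/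
noncomputable def tunGt (r : ℕ) (w : List Bool) : ℕ :=
  {i : ℕ | ∃ A B C : List Bool, IsDyck B ∧ w = A ++ true :: (B ++ false :: C) ∧
    A.length = i ∧ C.length + 2 * r < A.length}.ncard

/-- Number of tunnels of `w` with `|A| ≤ |C| + 2r` (midpoint in `x ≤ n + r`). -/
noncomputable def tunLe (r : ℕ) (w : List Bool) : ℕ :=
  {i : ℕ | ∃ A B C : List Bool, IsDyck B ∧ w = A ++ true :: (B ++ false :: C) ∧
    A.length = i ∧ A.length ≤ C.length + 2 * r}.ncard

/-- Number of centered tunnels `ct(w)`. -/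
noncomputable def ctun (w : List Bool) : ℕ := tunEq 0 w

/-- Number of right tunnels `rt(w)`. -/
noncomputable def rtun (w : List Bool) : ℕ := tunGt 0 w

/-- Number of left tunnels `lt(w)`: tunnels with `|A| < |C|`. -/
noncomputable def ltun (w : List Bool) : ℕ :=
  {i : ℕ | ∃ A B C : List Bool, IsDyck B ∧ w = A ++ true :: (B ++ false :: C) ∧
    A.length = i ∧ A.length < C.length}.ncard

/-- Number of multitunnels of `w` with `|A| = |C| + 2r` (midpoint at `x = n + r`):
decompositions `w = A B C` with `B` a nonempty Dyck word, indexed by `(|A|, |B|)`. -/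
noncomputable def mtunEq (r : ℕ) (w : List Bool) : ℕ :=
  {q : ℕ × ℕ | ∃ A B C : List Bool, IsDyck B ∧ B ≠ [] ∧ w = A ++ B ++ C ∧
    A.length = q.1 ∧ B.length = q.2 ∧ A.length = C.length + 2 * r}.ncard

/-- Number of centered multitunnels `cmt(w)`. -/
noncomputable def cmtun (w : List Bool) : ℕ := mtunEq 0 w

/-- Number of hills `h(w)`: decompositions `w = X u d Y` with `X, Y` Dyck words. -/
noncomputable def numHills (w : List Bool) : ℕ :=
  {i : ℕ | ∃ X Y : List Bool, IsDyck X ∧ IsDyck Y ∧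
    w = X ++ true :: false :: Y ∧ X.length = i}.ncard

/-- Number of hills of `w` lying in `x > 2r`, i.e. with `|X| ≥ 2r`. -/
noncomputable def numHillsAfter (r : ℕ) (w : List Bool) : ℕ :=
  {i : ℕ | ∃ X Y : List Bool, IsDyck X ∧ IsDyck Y ∧
    w = X ++ true :: false :: Y ∧ X.length = i ∧ 2 * r ≤ X.length}.ncard

/-- Number of arches (equivalently, returns) `ret(w)`: decompositions
`w = X (u B d) Y` with `X, B, Y` Dyck words. -/
noncomputable def numArches (w : List Bool) : ℕ :=
  {i : ℕ | ∃ X B Y : List Bool, IsDyck X ∧ IsDyck B ∧ IsDyck Y ∧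
    w = X ++ true :: (B ++ false :: Y) ∧ X.length = i}.ncard

/-- Number of arches of `w` lying in `x ≥ 2r`, i.e. with `|X| ≥ 2r`. -/
noncomputable def numArchesAfter (r : ℕ) (w : List Bool) : ℕ :=
  {i : ℕ | ∃ X B Y : List Bool, IsDyck X ∧ IsDyck B ∧ IsDyck Y ∧
    w = X ++ true :: (B ++ false :: Y) ∧ X.length = i ∧ 2 * r ≤ X.length}.ncard

/-- Number of odd rises `odr(w)`: `u`-steps at odd 1-indexed positions
(even 0-indexed positions). -/
noncomputable def oddRises (w : List Bool) : ℕ :=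
  {p : ℕ | p < w.length ∧ p % 2 = 0 ∧ w.getD p false = true}.ncard

/-- Number of even rises `er(w)`: `u`-steps at even 1-indexed positions
(odd 0-indexed positions). -/
noncomputable def evenRises (w : List Bool) : ℕ :=
  {p : ℕ | p < w.length ∧ p % 2 = 1 ∧ w.getD p false = true}.ncard

/-- Number of odd rises of `w` at 1-indexed positions `> 2r`. -/
noncomputable def oddRisesAfter (r : ℕ) (w : List Bool) : ℕ :=
  {p : ℕ | p < w.length ∧ p % 2 = 0 ∧ 2 * r ≤ p ∧ w.getD p false = true}.ncard

/-- Number of even rises of `w` at 1-indexed positions `> 2r`. -/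
noncomputable def evenRisesAfter (r : ℕ) (w : List Bool) : ℕ :=
  {p : ℕ | p < w.length ∧ p % 2 = 1 ∧ 2 * r ≤ p ∧ w.getD p false = true}.ncard

/-- Number of `u`-steps of `w` at 1-indexed positions `≤ 2r`. -/
noncomputable def upstepsBefore (r : ℕ) (w : List Bool) : ℕ :=
  {p : ℕ | p < w.length ∧ p < 2 * r ∧ w.getD p false = true}.ncard

/-- Number of peaks of `w`: occurrences of the factor `u d`. -/
noncomputable def numPeaks (w : List Bool) : ℕ :=
  {i : ℕ | i + 2 ≤ w.length ∧ w.getD i false = true ∧ w.getD (i + 1) true = false}.ncard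

/-- Number of occurrences in `w` of a factor of length 3 beginning with `u`
and ending with `d` (occurrences of `u⋆d`). -/
noncomputable def numUStarD (w : List Bool) : ℕ :=
  {i : ℕ | i + 3 ≤ w.length ∧ w.getD i false = true ∧ w.getD (i + 2) true = false}.ncard

/-- `ih(w)`: 1 if `w` begins with the factor `u d`, else 0. -/
noncomputable def initHill (w : List Bool) : ℕ :=
  if w.take 2 = [true, false] then 1 else 0

/-- `fh(w)`: 1 if `w = X u d` with `X` a Dyck word, else 0. -/
noncomputable def finHill (w : List Bool) : ℕ :=
  if ∃ X : List Bool, IsDyck X ∧ w = X ++ [true, false] then 1 else 0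

/-- `π` avoids the pattern 321. -/
def Avoids321 {n : ℕ} (π : Equiv.Perm (Fin n)) : Prop :=
  ¬ ∃ i j k : Fin n, i < j ∧ j < k ∧ π k < π j ∧ π j < π i

/-- `π` avoids the pattern 132. -/
def Avoids132 {n : ℕ} (π : Equiv.Perm (Fin n)) : Prop :=
  ¬ ∃ i j k : Fin n, i < j ∧ j < k ∧ π i < π k ∧ π k < π j

/-- Number of fixed points of `π`. -/
noncomputable def fixedPts {n : ℕ} (π : Equiv.Perm (Fin n)) : ℕ :=
  {i : Fin n | π i = i}.ncard

/-- Number of excedances of `π`. -/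
noncomputable def excedances {n : ℕ} (π : Equiv.Perm (Fin n)) : ℕ :=
  {i : Fin n | i < π i}.ncard

/-- Number of descents of `π`. -/
noncomputable def descents {n : ℕ} (π : Equiv.Perm (Fin n)) : ℕ :=
  {i : ℕ | ∃ (h1 : i < n) (h2 : i + 1 < n), π ⟨i + 1, h2⟩ < π ⟨i, h1⟩}.ncard

/-- `α_r(π) = #{i : π(i) = i + r}` (stated 0-indexed, equivalent to the 1-indexed version). -/
noncomputable def alphaStat {n : ℕ} (r : ℕ) (π : Equiv.Perm (Fin n)) : ℕ :=
  {i : Fin n | (π i : ℕ) = (i : ℕ) + r}.ncard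

/-- `β_r(π) = #{i : i > r, π(i) = i}` (for 1-indexed `i`; 0-indexed this is `r ≤ i`). -/
noncomputable def betaStat {n : ℕ} (r : ℕ) (π : Equiv.Perm (Fin n)) : ℕ :=
  {i : Fin n | r ≤ (i : ℕ) ∧ π i = i}.ncard


-- ===== auxiliary lemmas =====

-- basic count lemma
lemma count_tf (l : List Bool) : l.count true + l.count false = l.length := by
  induction l with
  | nil => simp
  | cons a t ih => cases a <;> simp [List.count_cons] <;> omega

lemma IsDyck.len_even {w : List Bool} (h : IsDyck w) : w.length % 2 = 0 := by
  have := count_tf w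
  have := h.1
  omega

lemma take_dyck_prefix {w : List Bool} (h : IsDyck w) (m : ℕ) :
    (w.take m).count false ≤ (w.take m).count true :=
  h.2 _ (List.take_prefix m w)

lemma dyck_split_ct_le {w P S : List Bool} (hw : IsDyck w) (h : w = P ++ S) :
    S.count true ≤ S.count false := by
  have h1 := hw.1
  have h2 := hw.2 P ⟨S, h.symm⟩
  rw [h] at h1
  simp [List.count_append] at h1
  omega

lemma dyck_drop_of_take {w : List Bool} (hw : IsDyck w) {m : ℕ}
    (ht : IsDyck (w.take m)) : IsDyck (w.drop m) := by
  constructor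
  · have h1 := hw.1
    have h2 := ht.1
    have := List.take_append_drop m w
    have e1 : (w.take m).count false + (w.drop m).count false = w.count false := by
      rw [← List.count_append, this]
    have e2 : (w.take m).count true + (w.drop m).count true = w.count true := by
      rw [← List.count_append, this]
    omega
  · intro p hp
    obtain ⟨s, hs⟩ := hp
    have hpre : (w.take m) ++ p <+: w := by
      refine ⟨s, ?_⟩
      rw [List.append_assoc, hs, List.take_append_drop]
    have := hw.2 _ hpre
    have h2 := ht.1
    simp [List.count_append] at this
    omega

-- extraction lemmas from a Matched decomposition
lemma decomp_drop {w A : List Bool} {x : Bool} {X : List Bool}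
    (h : w = A ++ x :: X) : w.drop (A.length + 1) = X := by
  subst h
  rw [show A ++ x :: X = (A ++ [x]) ++ X by simp]
  rw [show A.length + 1 = (A ++ [x]).length by simp]
  exact List.drop_left

lemma decomp_getElem {w A : List Bool} {x : Bool} {X : List Bool}
    (h : w = A ++ x :: X) : w[A.length]? = some x := by
  subst h
  rw [List.getElem?_append_right le_rfl]
  simp

lemma Matched.lt {w : List Bool} {i j : ℕ} (h : Matched w i j) : i < j := by
  obtain ⟨A, B, C, _, _, _, hj⟩ := h; omega

lemma Matched.lt_length {w : List Bool} {i j : ℕ} (h : Matched w i j) :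
    j < w.length := by
  obtain ⟨A, B, C, _, hw, hA, hj⟩ := h
  subst hw; simp; omega

lemma Matched.getElem_left {w : List Bool} {i j : ℕ} (h : Matched w i j) :
    w[i]? = some true := by
  obtain ⟨A, B, C, _, hw, hA, hj⟩ := h
  subst hA; exact decomp_getElem hw

lemma Matched.getElem_right {w : List Bool} {i j : ℕ} (h : Matched w i j) :
    w[j]? = some false := by
  obtain ⟨A, B, C, hB, hw, hA, hj⟩ := h
  have : w = (A ++ true :: B) ++ false :: C := by simp [hw]
  have hl : (A ++ true :: B).length = j := by simp; omega
  rw [← hl]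
  exact decomp_getElem this



lemma append_false_len_ne {X Y X' Y' : List Bool} (hX : IsDyck X) (hX' : IsDyck X')
    (h : X ++ false :: Y = X' ++ false :: Y') (hlt : X.length < X'.length) : False := by
  have e1 : (X ++ false :: Y).take (X.length + 1) = X ++ [false] := by
    rw [List.take_append, List.take_of_length_le (by omega)]
    simp
  have e2 : (X' ++ false :: Y').take (X.length + 1) = X'.take (X.length + 1) := by
    rw [List.take_append]
    have h0 : X.length + 1 - X'.length = 0 := by omega
    simp [h0]
  have hpre : X'.take (X.length + 1) = X ++ [false] := by rw [← e2, ← h, e1]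
  have hc := hX'.2 _ (hpre ▸ List.take_prefix (X.length + 1) X')
  simp [List.count_append] at hc
  have := hX.1
  omega

lemma matched_unique_left {w : List Bool} {i j j' : ℕ}
    (h : Matched w i j) (h' : Matched w i j') : j = j' := by
  obtain ⟨A, B, C, hB, hw, hA, hj⟩ := h
  obtain ⟨A', B', C', hB', hw', hA', hj'⟩ := h'
  have d1 := decomp_drop hw
  have d2 := decomp_drop hw'
  rw [hA] at d1
  rw [hA'] at d2
  have hd : B ++ false :: C = B' ++ false :: C' := by rw [← d1, ← d2]
  rcases Nat.lt_trichotomy B.length B'.length with hlt | heq | hgt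
  · exact absurd hd (fun hd => append_false_len_ne hB hB' hd hlt)
  · omega
  · exact absurd hd.symm (fun hd => append_false_len_ne hB' hB hd hgt)

lemma matched_unique_right {w : List Bool} {i i' j : ℕ}
    (h : Matched w i j) (h' : Matched w i' j) : i = i' := by
  have key : ∀ {x y : ℕ}, Matched w x j → Matched w y j → x < y → False := by
    intro x y hx hy hlt
    have hyt := hy.getElem_left
    obtain ⟨A, B, C, hB, hw, hA, hj⟩ := hx
    obtain ⟨A', B', C', hB', hw', hA', hj'⟩ := hy
    have d1 := decomp_drop hw
    have d2 := decomp_drop hw'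
    rw [hA] at d1
    rw [hA'] at d2
    have hyx : y - x ≤ B.length := by omega
    have e : B' ++ false :: C' = B.drop (y - x) ++ false :: C := by
      rw [← d2, show y + 1 = (x + 1) + (y - x) by omega, ← List.drop_drop, d1,
        List.drop_append]
      have h0 : y - x - B.length = 0 := by omega
      simp [h0]
    have eB : B' = B.drop (y - x) := by
      have t1 : (B' ++ false :: C').take B'.length = B' := List.take_left
      have t2 : (B.drop (y - x) ++ false :: C).take B'.length = B.drop (y - x) :=
        List.take_left' (by simp; omega)
      rw [← t1, e, t2]
    have htru : B[y - x - 1]? = some true := by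
      have g1 : (w.drop (x + 1))[y - x - 1]? = w[y]? := by
        rw [List.getElem?_drop]
        congr 1
        omega
      rw [d1, List.getElem?_append_left (by omega)] at g1
      rw [g1, hyt]
    have hsplit : B = B.take (y - x) ++ B.drop (y - x) := (List.take_append_drop _ _).symm
    have hcnt : ∀ b : Bool, B.count b = (B.take (y - x)).count b + (B.drop (y - x)).count b := by
      intro b
      conv_lhs => rw [hsplit]
      rw [List.count_append]
    have htk : B.take (y - x) = B.take (y - x - 1) ++ [true] := by
      rw [show y - x = (y - x - 1) + 1 by omega, List.take_succ, htru]
      rfl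
    have hpre := hB.2 _ (List.take_prefix (y - x - 1) B)
    have hBbal := hB.1
    have hB'bal := hB'.1
    rw [eB] at hB'bal
    have hc1 := hcnt false
    have hc2 := hcnt true
    rw [htk] at hc1 hc2
    simp [List.count_append] at hc1 hc2
    omega
  rcases Nat.lt_trichotomy i i' with hlt | heq | hgt
  · exact absurd hlt (fun hlt => key h h' hlt)
  · exact heq
  · exact absurd hgt (fun hgt => key h' h hgt)

lemma matched_not_ud {w : List Bool} {i j k : ℕ}
    (h : Matched w i j) (h' : Matched w j k) : False := by
  have h1 := h.getElem_right
  have h2 := h'.getElem_left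
  rw [h1] at h2
  simp at h2

lemma MatchPair.symm {w : List Bool} {i j : ℕ} (h : MatchPair w i j) : MatchPair w j i :=
  h.elim Or.inr Or.inl

lemma matchPair_unique {w : List Bool} {k j j' : ℕ}
    (h : MatchPair w k j) (h' : MatchPair w k j') : j = j' := by
  rcases h with h | h <;> rcases h' with h' | h'
  · exact matched_unique_left h h'
  · exact absurd h' (fun h'' => matched_not_ud h'' h)
  · exact absurd h (fun h'' => matched_not_ud h'' h')
  · exact matched_unique_right h h'

lemma matchPair_ne {w : List Bool} {i j : ℕ} (h : MatchPair w i j) : i ≠ j := by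
  rcases h with h | h
  · exact Nat.ne_of_lt h.lt
  · exact (Nat.ne_of_lt h.lt).symm

lemma nc1 {w : List Bool} {a b i j : ℕ} (hab : Matched w a b) (hij : Matched w i j)
    (h1 : i < a) (h2 : a < j) (h3 : j < b) : False := by
  obtain ⟨A, B, C, hB, hw, hA, hb⟩ := hab
  obtain ⟨A₁, B₁, C₁, hB₁, hw₁, hA₁, hj⟩ := hij
  have d1 := decomp_drop hw₁
  rw [hA₁] at d1
  have hAd : (A.drop (i + 1)).length = a - i - 1 := by simp; omega
  have d2 : w.drop (i + 1) = A.drop (i + 1) ++ true :: (B ++ false :: C) := by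
    rw [hw, List.drop_append]
    have h0 : i + 1 - A.length = 0 := by omega
    simp [h0]
  have e : B₁ = A.drop (i + 1) ++ true :: B.take (j - a - 1) := by
    have t1 : (w.drop (i + 1)).take (j - i - 1) = B₁ := by
      rw [d1]
      exact List.take_left' (by omega)
    rw [← t1, d2, List.take_append,
      List.take_of_length_le (by rw [hAd]; omega), hAd]
    congr 1
    rw [show j - i - 1 - (a - i - 1) = (j - a - 1) + 1 by omega]
    simp only [List.take_succ_cons]
    congr 1
    rw [List.take_append]
    have h0 : j - a - 1 - B.length = 0 := by omega
    simp [h0]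
  have hP : (A.drop (i + 1)).count false ≤ (A.drop (i + 1)).count true :=
    hB₁.2 _ ⟨_, e.symm⟩
  have hS := dyck_split_ct_le hB₁ e
  have hT : (B.take (j - a - 1)).count false ≤ (B.take (j - a - 1)).count true :=
    hB.2 _ (List.take_prefix _ B)
  simp [List.count_cons] at hS
  omega

lemma nc2 {w : List Bool} {a b i j : ℕ} (hab : Matched w a b) (hij : Matched w i j)
    (h1 : a < i) (h2 : i < b) (h3 : b < j) : False := by
  obtain ⟨A, B, C, hB, hw, hA, hb⟩ := hab
  obtain ⟨A₁, B₁, C₁, hB₁, hw₁, hA₁, hj⟩ := hij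
  have d1 := decomp_drop hw₁
  rw [hA₁] at d1
  have d2 : w.drop (i + 1) = B.drop (i - a) ++ false :: C := by
    rw [hw, show A ++ true :: (B ++ false :: C) = (A ++ [true]) ++ (B ++ false :: C) by simp,
      List.drop_append]
    have h0 : (A ++ [true]).drop (i + 1) = [] := by
      apply List.drop_eq_nil_of_le
      simp
      omega
    rw [h0, List.drop_append]
    have h1' : i + 1 - (A ++ [true]).length = i - a := by simp; omega
    have h2' : i - a - B.length = 0 := by omega
    rw [h1']
    simp [h2']
  have hBd : (B.drop (i - a)).length = b - i - 1 := by simp; omega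
  have e : B₁.take (b - i) = B.drop (i - a) ++ [false] := by
    have t1 : (w.drop (i + 1)).take (b - i) = B₁.take (b - i) := by
      rw [d1, List.take_append]
      have h0 : b - i - B₁.length = 0 := by omega
      simp [h0]
    rw [← t1, d2, List.take_append,
      List.take_of_length_le (by rw [hBd]; omega), hBd,
      show b - i - (b - i - 1) = 1 by omega]
    rfl
  have hpre : (B.drop (i - a) ++ [false]).count false ≤ (B.drop (i - a) ++ [false]).count true := by
    rw [← e]
    exact hB₁.2 _ (List.take_prefix _ B₁)
  have hsp := dyck_split_ct_le hB (List.take_append_drop (i - a) B).symm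
  simp [List.count_append] at hpre
  omega

lemma match_outside {w : List Bool} {a b k j : ℕ} (hab : Matched w a b)
    (hkj : MatchPair w k j) (hk : k < a ∨ b < k) : j < a ∨ b < j := by
  by_contra hcon
  push_neg at hcon
  obtain ⟨hja, hjb⟩ := hcon
  rcases hkj with hm | hm
  · -- Matched w k j, k < j
    rcases hk with hk | hk
    · -- k < a ≤ j ≤ b
      rcases Nat.lt_trichotomy j b with hjb' | rfl | h3
      · rcases Nat.lt_or_ge a j with h2 | h2
        · exact nc1 hab hm hk h2 hjb'
        · have : j = a := by omega
          subst this
          have g1 := hm.getElem_right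
          have g2 := hab.getElem_left
          rw [g1] at g2
          simp at g2
      · have := matched_unique_right hm hab
        omega
      · omega
    · have := hm.lt
      omega
  · -- Matched w j k
    rcases hk with hk | hk
    · have := hm.lt
      omega
    · rcases Nat.lt_trichotomy a j with h2 | rfl | h2
      · rcases Nat.lt_or_ge j b with h3 | h3
        · exact nc2 hab hm h2 h3 hk
        · have : j = b := by omega
          subst this
          have g1 := hm.getElem_left
          have g2 := hab.getElem_right
          rw [g1] at g2
          simp at g2
      · have := matched_unique_left hm hab
        omega
      · omega



lemma dyck_take_isDyck {w : List Bool} (hw : IsDyck w) {m : ℕ}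
    (hbal : (w.take m).count false = (w.take m).count true) : IsDyck (w.take m) :=
  ⟨hbal, fun p hp => hw.2 p (hp.trans (List.take_prefix m w))⟩

lemma dyck_first_return {w : List Bool} (hw : IsDyck w) (hne : w ≠ []) :
    ∃ B C : List Bool, IsDyck B ∧ IsDyck C ∧ w = true :: (B ++ false :: C) := by
  obtain ⟨x, t, rfl⟩ : ∃ x t, w = x :: t := by
    cases w with
    | nil => exact absurd rfl hne
    | cons x t => exact ⟨x, t, rfl⟩
  have hx : x = true := by
    by_contra hxf
    have hx : x = false := by cases x <;> simp_all
    subst hx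
    have := hw.2 [false] ⟨t, rfl⟩
    simp at this
  subst hx
  set w := true :: t with hwdef
  have hP : ∃ m, 0 < m ∧ (w.take m).count false = (w.take m).count true := by
    refine ⟨w.length, by simp [hwdef], ?_⟩
    rw [List.take_of_length_le le_rfl]
    exact hw.1
  classical
  obtain ⟨m, ⟨hm0, hmbal⟩, hmin⟩ :
      ∃ m, (0 < m ∧ (w.take m).count false = (w.take m).count true) ∧
        ∀ k < m, ¬(0 < k ∧ (w.take k).count false = (w.take k).count true) :=
    ⟨Nat.find hP, Nat.find_spec hP, fun k hk => Nat.find_min hP hk⟩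
  have hmle : m ≤ w.length := by
    by_contra hgt
    refine hmin w.length (by omega) ⟨by simp [hwdef], ?_⟩
    rw [List.take_of_length_le le_rfl]
    exact hw.1
  have hm2 : 2 ≤ m := by
    by_contra h
    have hm1 : m = 1 := by omega
    rw [hm1, hwdef] at hmbal
    simp at hmbal
  -- last letter of w.take m is false
  have hlast : w[m - 1]? = some false := by
    have hlt : m - 1 < w.length := by omega
    rw [List.getElem?_eq_getElem hlt]
    by_contra hne'
    have htv : w[m - 1] = true := by
      cases h : w[m - 1]
      · exact absurd (by rw [h]) hne'
      · rfl
    have hts : w.take m = w.take (m - 1) ++ [true] := by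
      rw [show m = (m - 1) + 1 by omega, List.take_succ,
        List.getElem?_eq_getElem hlt, htv]
      rfl
    have hpre := hw.2 _ (List.take_prefix (m - 1) w)
    rw [hts] at hmbal
    simp [List.count_append] at hmbal
    omega
  set B := t.take (m - 2) with hBdef
  have hBlen : B.length = m - 2 := by
    rw [hBdef, List.length_take]
    have : t.length = w.length - 1 := by simp [hwdef]
    omega
  have htake : w.take m = true :: (B ++ [false]) := by
    rw [show m = (m - 2) + 1 + 1 by omega]
    rw [hwdef]
    simp only [List.take_succ_cons]
    rw [List.take_succ]
    have : t[m - 2]? = some false := by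
      have : w[m - 1]? = t[m - 2]? := by
        rw [hwdef, show m - 1 = (m - 2) + 1 by omega]
        simp
      rw [← this, hlast]
    rw [this]
    rfl
  have hBbal : B.count false = B.count true := by
    rw [htake] at hmbal
    simp [List.count_append] at hmbal
    omega
  have hBdyck : IsDyck B := by
    refine ⟨hBbal, fun p hp => ?_⟩
    have hpt : p <+: t := hp.trans (List.take_prefix _ t)
    have hple : p.length ≤ m - 2 := by
      have := hp.length_le
      omega
    have hwp : w.take (p.length + 1) = true :: p := by
      rw [hwdef]
      simp only [List.take_succ_cons]
      congr 1
      exact (List.prefix_iff_eq_take.mp hpt).symm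
    have hb := hw.2 _ (List.take_prefix (p.length + 1) w)
    rw [hwp] at hb
    simp [List.count_cons] at hb
    rcases Nat.lt_or_ge (p.count false) (p.count true + 1) with h | h
    · omega
    · exfalso
      have heq : (w.take (p.length + 1)).count false = (w.take (p.length + 1)).count true := by
        rw [hwp]
        simp [List.count_cons]
        omega
      exact hmin (p.length + 1) (by omega) ⟨by omega, heq⟩
  have htkDyck : IsDyck (w.take m) := dyck_take_isDyck hw hmbal
  have hCdyck : IsDyck (w.drop m) := dyck_drop_of_take hw htkDyck
  refine ⟨B, w.drop m, hBdyck, hCdyck, ?_⟩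
  conv_lhs => rw [← List.take_append_drop m w]
  rw [htake]
  simp

lemma matched_shift {B : List Bool} {x y : ℕ} (P S : List Bool) (h : Matched B x y) :
    Matched (P ++ B ++ S) (P.length + x) (P.length + y) := by
  obtain ⟨A, B', C', hB', hBeq, hA, hy⟩ := h
  have hlen : (P ++ A).length = P.length + x := by rw [List.length_append, hA]
  refine ⟨P ++ A, B', C' ++ S, hB', ?_, hlen, by omega⟩
  rw [hBeq]
  simp

lemma exists_match_aux : ∀ (n : ℕ) (w : List Bool), w.length = n → IsDyck w →
    ∀ k < w.length, ∃ j, MatchPair w k j := by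
  intro n
  induction n using Nat.strong_induction_on with
  | _ n ih =>
    intro w hlen hw k hk
    have hne : w ≠ [] := by
      intro h
      rw [h] at hk
      simp at hk
    obtain ⟨B, C, hB, hC, hweq⟩ := dyck_first_return hw hne
    have hwlen : w.length = B.length + C.length + 2 := by rw [hweq]; simp; omega
    have hm0 : Matched w 0 (B.length + 1) := ⟨[], B, C, hB, by simpa using hweq, rfl, by omega⟩
    rcases Nat.lt_trichotomy k (B.length + 1) with hlt | heq | hgt
    · rcases Nat.eq_zero_or_pos k with rfl | hkpos
      · exact ⟨B.length + 1, Or.inl hm0⟩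
      · obtain ⟨j, hj⟩ := ih B.length (by omega) B rfl hB (k - 1) (by omega)
        have hsh : ∀ {x y : ℕ}, Matched B x y → Matched w (1 + x) (1 + y) := by
          intro x y hxy
          have := matched_shift [true] (false :: C) hxy
          simpa [hweq] using this
        rcases hj with hj | hj
        · refine ⟨1 + j, Or.inl ?_⟩
          have := hsh hj
          rwa [show 1 + (k - 1) = k by omega] at this
        · refine ⟨1 + j, Or.inr ?_⟩
          have := hsh hj
          rwa [show 1 + (k - 1) = k by omega] at this
    · exact ⟨0, Or.inr (heq ▸ hm0)⟩
    · obtain ⟨j, hj⟩ := ih C.length (by omega) C rfl hC (k - B.length - 2) (by omega)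
      have hsh : ∀ {x y : ℕ}, Matched C x y → Matched w (B.length + 2 + x) (B.length + 2 + y) := by
        intro x y hxy
        have := matched_shift (true :: (B ++ [false])) [] hxy
        have hlen' : (true :: (B ++ [false])).length = B.length + 2 := by simp
        rw [hlen'] at this
        have hweq' : (true :: (B ++ [false])) ++ C ++ [] = w := by rw [hweq]; simp
        rwa [hweq'] at this
      rcases hj with hj | hj
      · refine ⟨B.length + 2 + j, Or.inl ?_⟩
        have := hsh hj
        rwa [show B.length + 2 + (k - B.length - 2) = k by omega] at this
      · refine ⟨B.length + 2 + j, Or.inr ?_⟩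
        have := hsh hj
        rwa [show B.length + 2 + (k - B.length - 2) = k by omega] at this

lemma matchPair_lt_length {w : List Bool} {k j : ℕ} (h : MatchPair w k j)
    (hk : k < w.length) : j < w.length := by
  rcases h with h | h
  · exact h.lt_length
  · exact lt_trans h.lt hk

lemma exists_match {w : List Bool} (hw : IsDyck w) {k : ℕ} (hk : k < w.length) :
    ∃ j, MatchPair w k j ∧ j < w.length := by
  obtain ⟨j, hj⟩ := exists_match_aux w.length w rfl hw k hk
  exact ⟨j, hj, matchPair_lt_length hj hk⟩



lemma zig_even {L p : ℕ} (hp : p % 2 = 0) : zigR 0 L p = p / 2 := by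
  simp [zigR, hp]

lemma zig_odd {L p : ℕ} (hp : p % 2 = 1) : zigR 0 L p = L - (p + 1) / 2 := by
  simp [zigR, hp]

lemma zig_lt {L p : ℕ} (hp : p < L) : zigR 0 L p < L := by
  rcases Nat.mod_two_eq_zero_or_one p with h | h
  · rw [zig_even h]; omega
  · rw [zig_odd h]; omega

lemma zig_inj {L p q : ℕ} (hL : L % 2 = 0) (hp : p < L) (hq : q < L)
    (h : zigR 0 L p = zigR 0 L q) : p = q := by
  rcases Nat.mod_two_eq_zero_or_one p with h1 | h1 <;>
    rcases Nat.mod_two_eq_zero_or_one q with h2 | h2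
  · rw [zig_even h1, zig_even h2] at h; omega
  · rw [zig_even h1, zig_odd h2] at h; omega
  · rw [zig_odd h1, zig_even h2] at h; omega
  · rw [zig_odd h1, zig_odd h2] at h; omega

def rt (L k : ℕ) : ℕ := if 2 * k < L then 2 * k else 2 * (L - 1 - k) + 1

lemma rt_lt {L k : ℕ} (hk : k < L) : rt L k < L := by
  unfold rt; split <;> omega

lemma zig_rt {L k : ℕ} (hk : k < L) : zigR 0 L (rt L k) = k := by
  unfold rt
  split
  · rw [zig_even (by omega)]; omega
  · rw [zig_odd (by omega)]; omega

noncomputable def mtime (D : List Bool) (p : ℕ) : ℕ :=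
  if h : ∃ q, q < D.length ∧ MatchPair D (zigR 0 D.length p) (zigR 0 D.length q)
  then h.choose else 0

lemma mtime_spec {D : List Bool} (hD : IsDyck D) {p : ℕ} (hp : p < D.length) :
    mtime D p < D.length ∧ MatchPair D (zigR 0 D.length p) (zigR 0 D.length (mtime D p)) := by
  have hzp : zigR 0 D.length p < D.length := zig_lt hp
  obtain ⟨j, hpair, hj⟩ := exists_match hD hzp
  have hex : ∃ q, q < D.length ∧ MatchPair D (zigR 0 D.length p) (zigR 0 D.length q) :=
    ⟨rt D.length j, rt_lt hj, by rwa [zig_rt hj]⟩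
  rw [mtime, dif_pos hex]
  exact ⟨hex.choose_spec.1, hex.choose_spec.2⟩

lemma mtime_eq {D : List Bool} (hD : IsDyck D) {p q : ℕ} (hp : p < D.length)
    (hq : q < D.length) (hpair : MatchPair D (zigR 0 D.length p) (zigR 0 D.length q)) :
    mtime D p = q := by
  obtain ⟨h1, h2⟩ := mtime_spec hD hp
  have := matchPair_unique h2 hpair
  exact zig_inj hD.len_even h1 hq this

lemma mtime_invol {D : List Bool} (hD : IsDyck D) {p : ℕ} (hp : p < D.length) :
    mtime D (mtime D p) = p := by
  obtain ⟨h1, h2⟩ := mtime_spec hD hp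
  exact mtime_eq hD h1 hp h2.symm

lemma mtime_ne {D : List Bool} (hD : IsDyck D) {p : ℕ} (hp : p < D.length) :
    mtime D p ≠ p := by
  intro h
  obtain ⟨h1, h2⟩ := mtime_spec hD hp
  rw [h] at h2
  exact matchPair_ne h2 rfl

lemma psi_length (D : List Bool) : (psi D).length = D.length := by
  simp [psi, psiR]

lemma psi_getElem (D : List Bool) {p : ℕ} (hp : p < D.length) :
    (psi D)[p]? = some (if ∃ p' : ℕ, p' < p ∧
        MatchPair D (zigR 0 D.length p') (zigR 0 D.length p) then false else true) := by
  have hp' : p < (psi D).length := by rw [psi_length]; exact hp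
  rw [List.getElem?_eq_getElem hp']
  congr 1
  simp only [psi, psiR]
  rw [List.getElem_ofFn]

lemma psi_getElem_mtime {D : List Bool} (hD : IsDyck D) {p : ℕ} (hp : p < D.length) :
    (psi D)[p]? = some (if mtime D p < p then false else true) := by
  rw [psi_getElem D hp]
  congr 1
  apply if_congr _ rfl rfl
  constructor
  · rintro ⟨p', hp', hpair⟩
    have := mtime_eq hD hp (lt_trans hp' hp) hpair.symm
    omega
  · intro h
    exact ⟨mtime D p, h, (mtime_spec hD hp).2.symm⟩

lemma count_take_filter (l : List Bool) (b : Bool) :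
    ∀ m, m ≤ l.length →
      (l.take m).count b = ((Finset.range m).filter (fun p => l[p]? = some b)).card := by
  intro m
  induction m with
  | zero => simp
  | succ m ih =>
    intro h
    have hm : m < l.length := by omega
    rw [List.take_succ, List.count_append, ih (by omega), Finset.range_add_one,
      Finset.filter_insert]
    by_cases hb : l[m]? = some b
    · rw [if_pos hb, Finset.card_insert_of_notMem (by simp), hb]
      simp
    · rw [if_neg hb]
      rw [List.getElem?_eq_getElem hm] at hb ⊢
      have hnb : l[m] ≠ b := fun h' => hb (by rw [h'])
      simp [List.count_singleton', hnb]

lemma psi_count_false {D : List Bool} (hD : IsDyck D) {m : ℕ} (hm : m ≤ D.length) :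
    ((psi D).take m).count false =
      ((Finset.range m).filter (fun p => mtime D p < p)).card := by
  rw [count_take_filter _ _ m (by rw [psi_length]; exact hm)]
  congr 1
  apply Finset.filter_congr
  intro p hp
  rw [Finset.mem_range] at hp
  rw [psi_getElem_mtime hD (by omega)]
  by_cases h : mtime D p < p <;> simp [h]

lemma psi_count_true {D : List Bool} (hD : IsDyck D) {m : ℕ} (hm : m ≤ D.length) :
    ((psi D).take m).count true =
      ((Finset.range m).filter (fun p => p < mtime D p)).card := by
  rw [count_take_filter _ _ m (by rw [psi_length]; exact hm)]
  congr 1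
  apply Finset.filter_congr
  intro p hp
  rw [Finset.mem_range] at hp
  rw [psi_getElem_mtime hD (by omega)]
  have hne := mtime_ne hD (lt_of_lt_of_le hp hm)
  by_cases h : mtime D p < p <;> simp [h] <;> omega

lemma psi_count_le {D : List Bool} (hD : IsDyck D) {m : ℕ} (hm : m ≤ D.length) :
    ((psi D).take m).count false ≤ ((psi D).take m).count true := by
  rw [psi_count_false hD hm, psi_count_true hD hm]
  apply Finset.card_le_card_of_injOn (mtime D)
  · intro p hp
    rw [Finset.mem_coe, Finset.mem_filter, Finset.mem_range] at hp ⊢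
    obtain ⟨hpm, hlt⟩ := hp
    have hpL : p < D.length := by omega
    refine ⟨by omega, ?_⟩
    rw [mtime_invol hD hpL]
    exact hlt
  · intro p hp q hq h
    simp only [Finset.coe_filter, Set.mem_setOf_eq, Finset.mem_range] at hp hq
    have : mtime D (mtime D p) = mtime D (mtime D q) := by rw [h]
    rwa [mtime_invol hD (by omega), mtime_invol hD (by omega)] at this

lemma psi_take_dyck_iff {D : List Bool} (hD : IsDyck D) {m : ℕ} (hm : m ≤ D.length) :
    IsDyck ((psi D).take m) ↔ ∀ p < m, mtime D p < m := by
  constructor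
  · intro hdyck p hp
    have hbal := hdyck.1
    rw [psi_count_false hD hm, psi_count_true hD hm] at hbal
    rcases Nat.lt_or_ge (mtime D p) p with h | h
    · omega
    · have hne := mtime_ne hD (p := p) (by omega : p < D.length)
      have hplt : p < mtime D p := by omega
      -- p is an opener; use surjectivity
      have hsurj := Finset.surj_on_of_inj_on_of_card_le
        (s := (Finset.range m).filter (fun q => mtime D q < q))
        (t := (Finset.range m).filter (fun q => q < mtime D q))
        (fun a _ => mtime D a)
        (fun a ha => by
          rw [Finset.mem_filter, Finset.mem_range] at ha
          show mtime D a ∈ _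
          rw [Finset.mem_filter, Finset.mem_range]
          exact ⟨by omega, by rw [mtime_invol hD (by omega)]; exact ha.2⟩)
        (fun a₁ a₂ ha₁ ha₂ hfeq => by
          rw [Finset.mem_filter, Finset.mem_range] at ha₁ ha₂
          have hfeq' : mtime D a₁ = mtime D a₂ := hfeq
          have : mtime D (mtime D a₁) = mtime D (mtime D a₂) := by rw [hfeq']
          rwa [mtime_invol hD (by omega), mtime_invol hD (by omega)] at this)
        (le_of_eq hbal.symm)
      obtain ⟨a, ha, heq⟩ := hsurj p (by
        rw [Finset.mem_filter, Finset.mem_range]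
        exact ⟨hp, hplt⟩)
      rw [Finset.mem_filter, Finset.mem_range] at ha
      have heq' : p = mtime D a := heq
      have : mtime D p = a := by rw [heq', mtime_invol hD (by omega)]
      omega
  · intro hcl
    refine ⟨?_, ?_⟩
    · rw [psi_count_false hD hm, psi_count_true hD hm]
      apply le_antisymm
      · -- closers ≤ openers : from psi_count_le proof, reuse by cards
        rw [← psi_count_false hD hm, ← psi_count_true hD hm]
        exact psi_count_le hD hm
      · apply Finset.card_le_card_of_injOn (mtime D)
        · intro p hp
          rw [Finset.mem_coe, Finset.mem_filter, Finset.mem_range] at hp ⊢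
          refine ⟨hcl p hp.1, ?_⟩
          rw [mtime_invol hD (by omega)]
          exact hp.2
        · intro p hp q hq h
          simp only [Finset.coe_filter, Set.mem_setOf_eq, Finset.mem_range] at hp hq
          have : mtime D (mtime D p) = mtime D (mtime D q) := by rw [h]
          rwa [mtime_invol hD (by omega), mtime_invol hD (by omega)] at this
    · intro p hp
      have hple : p.length ≤ m := by
        have := hp.length_le
        rw [List.length_take, psi_length] at this
        omega
      have hpeq : p = (psi D).take p.length :=
        List.prefix_iff_eq_take.mp (hp.trans (List.take_prefix m (psi D)))
      rw [hpeq]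
      exact psi_count_le hD (le_trans hple hm)

lemma psi_dyck {D : List Bool} (hD : IsDyck D) : IsDyck (psi D) := by
  have : psi D = (psi D).take D.length := by
    rw [List.take_of_length_le]
    rw [psi_length]
  rw [this]
  rw [psi_take_dyck_iff hD le_rfl]
  intro p hp
  exact (mtime_spec hD hp).1



lemma hill_decomp_iff {w : List Bool} {i : ℕ} :
    (∃ X Y : List Bool, IsDyck X ∧ IsDyck Y ∧ w = X ++ true :: false :: Y ∧ X.length = i) ↔
    (i + 2 ≤ w.length ∧ IsDyck (w.take i) ∧ IsDyck (w.drop (i + 2)) ∧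
      w[i]? = some true ∧ w[i + 1]? = some false) := by
  constructor
  · rintro ⟨X, Y, hX, hY, rfl, rfl⟩
    refine ⟨by simp, ?_, ?_, ?_, ?_⟩
    · rw [List.take_left]
      exact hX
    · rw [show X ++ true :: false :: Y = (X ++ [true, false]) ++ Y by simp,
        List.drop_left' (by simp)]
      exact hY
    · exact decomp_getElem rfl
    · have he : X ++ true :: false :: Y = (X ++ [true]) ++ false :: Y := by simp
      have := decomp_getElem he
      simpa using this
  · rintro ⟨hlen, hX, hY, hgi, hgi1⟩
    refine ⟨w.take i, w.drop (i + 2), hX, hY, ?_, by rw [List.length_take]; omega⟩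
    have h1 : i < w.length := by omega
    have h2 : i + 1 < w.length := by omega
    conv_lhs => rw [← List.take_append_drop i w]
    congr 1
    rw [List.drop_eq_getElem_cons h1]
    rw [List.getElem?_eq_getElem h1] at hgi
    have e1 : w[i] = true := by injection hgi
    rw [e1]
    congr 1
    rw [show i + 1 + 1 = i + 2 from rfl] at *
    rw [List.drop_eq_getElem_cons h2]
    rw [List.getElem?_eq_getElem h2] at hgi1
    have e2 : w[i + 1] = false := by injection hgi1
    rw [e2]

lemma ctun_set_eq (D : List Bool) :
    {i : ℕ | ∃ A B C : List Bool, IsDyck B ∧ D = A ++ true :: (B ++ false :: C) ∧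
      A.length = i ∧ A.length = C.length + 2 * 0} =
    {a : ℕ | Matched D a (D.length - 1 - a)} := by
  ext a
  simp only [Set.mem_setOf_eq, Nat.mul_zero, Nat.add_zero]
  constructor
  · rintro ⟨A, B, C, hB, hw, rfl, hAC⟩
    have hlen : D.length = A.length + B.length + C.length + 2 := by
      rw [hw]; simp; omega
    have he : D.length - 1 - A.length = A.length + B.length + 1 := by omega
    rw [he]
    exact ⟨A, B, C, hB, hw, rfl, rfl⟩
  · rintro ⟨A, B, C, hB, hw, rfl, hj⟩
    have hlen : D.length = A.length + B.length + C.length + 2 := by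
      rw [hw]; simp; omega
    exact ⟨A, B, C, hB, hw, rfl, by omega⟩

lemma matched_facts {D : List Bool} {a : ℕ} (hm : Matched D a (D.length - 1 - a)) :
    2 * a + 2 ≤ D.length ∧ D.length - 1 - a = a + (D.length - 2 * a - 2) + 1 := by
  obtain ⟨A, B, C, hB, hw, hA, hj⟩ := hm
  have hlen : D.length = A.length + B.length + C.length + 2 := by
    rw [hw]; simp; omega
  omega

lemma hill_iff_tunnel {D : List Bool} (hD : IsDyck D) {i : ℕ} :
    (∃ X Y : List Bool, IsDyck X ∧ IsDyck Y ∧ psi D = X ++ true :: false :: Y ∧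
      X.length = i) ↔ ∃ a, i = 2 * a ∧ Matched D a (D.length - 1 - a) := by
  set L := D.length with hLdef
  have hLev : L % 2 = 0 := hD.len_even
  rw [hill_decomp_iff]
  rw [psi_length]
  constructor
  · rintro ⟨hlen, hX, hY, hgi, hgi1⟩
    have hcl : ∀ p < i, mtime D p < i := (psi_take_dyck_iff hD (by omega)).mp hX
    -- mtime D (i+1) = i
    have hlt1 : mtime D (i + 1) < i + 1 := by
      rw [psi_getElem_mtime hD (by omega : i + 1 < L)] at hgi1
      by_contra hcon
      rw [if_neg hcon] at hgi1
      simp at hgi1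
    have hmi : mtime D (i + 1) = i := by
      rcases Nat.lt_or_ge (mtime D (i + 1)) i with h | h
      · exfalso
        have h2 := hcl _ h
        have h3 : mtime D (mtime D (i + 1)) = i + 1 := mtime_invol hD (by omega)
        omega
      · omega
    have hpair : MatchPair D (zigR 0 L i) (zigR 0 L (i + 1)) := by
      have := (mtime_spec hD (by omega : i + 1 < L)).2
      rw [hmi] at this
      exact this.symm
    rcases Nat.mod_two_eq_zero_or_one i with hpar | hpar
    · -- i even
      refine ⟨i / 2, by omega, ?_⟩
      rw [zig_even hpar, zig_odd (by omega)] at hpair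
      have he : L - (i + 1 + 1) / 2 = L - 1 - i / 2 := by omega
      rw [he] at hpair
      rcases hpair with h | h
      · exact h
      · have := h.lt
        omega
    · -- i odd : contradiction by parity
      exfalso
      rw [zig_odd hpar, zig_even (by omega)] at hpair
      rcases hpair with h | h
      · have := h.lt
        omega
      · obtain ⟨A, B, C, hB, hw, hA, hj⟩ := h
        have hBev : B.length % 2 = 0 := hB.len_even
        have hlen2 : L = A.length + B.length + C.length + 2 := by
          rw [hLdef, hw]; simp; omega
        omega
  · rintro ⟨a, rfl, hm⟩
    obtain ⟨hi2, _⟩ := matched_facts hm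
    have hb : L - 1 - a = a + (L - 2 * a - 2) + 1 := (matched_facts hm).2
    have hzig2a : zigR 0 L (2 * a) = a := by
      rw [zig_even (by omega)]; omega
    have hzig2a1 : zigR 0 L (2 * a + 1) = L - 1 - a := by
      rw [zig_odd (by omega)]; omega
    have hcl : ∀ p < 2 * a, mtime D p < 2 * a := by
      intro p hp
      have hpL : p < L := by omega
      have hspec := mtime_spec hD hpL
      have hout : zigR 0 L (mtime D p) < a ∨ L - 1 - a < zigR 0 L (mtime D p) := by
        apply match_outside hm hspec.2
        rcases Nat.mod_two_eq_zero_or_one p with hpa | hpa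
        · left; rw [zig_even hpa]; omega
        · right; rw [zig_odd hpa]; omega
      set q := mtime D p with hqdef
      have hqL : q < L := hspec.1
      have hqz : zigR 0 L (rt L (zigR 0 L q)) = zigR 0 L q := zig_rt (zig_lt hqL)
      have hqe : q = rt L (zigR 0 L q) :=
        zig_inj hLev hqL (rt_lt (zig_lt hqL)) hqz.symm
      rcases hout with h | h
      · rw [hqe, rt, if_pos (by omega)]
        omega
      · have hzq : zigR 0 L q < L := zig_lt hqL
        rw [hqe, rt, if_neg (by omega)]
        omega
    have hmt2a : mtime D (2 * a) = 2 * a + 1 := by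
      apply mtime_eq hD (by omega) (by omega)
      rw [hzig2a, hzig2a1]
      exact Or.inl hm
    have hmt2a1 : mtime D (2 * a + 1) = 2 * a := by
      apply mtime_eq hD (by omega) (by omega)
      rw [hzig2a, hzig2a1]
      exact Or.inr hm
    have hcl2 : ∀ p < 2 * a + 2, mtime D p < 2 * a + 2 := by
      intro p hp
      rcases Nat.lt_trichotomy p (2 * a) with h | h | h
      · have := hcl p h
        omega
      · subst h
        rw [hmt2a]
        omega
      · have : p = 2 * a + 1 := by omega
        subst this
        rw [hmt2a1]
        omega
    refine ⟨by omega, (psi_take_dyck_iff hD (by omega)).mpr hcl, ?_, ?_, ?_⟩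
    · exact dyck_drop_of_take (psi_dyck hD)
        ((psi_take_dyck_iff hD (by omega)).mpr hcl2)
    · rw [psi_getElem_mtime hD (by omega : 2 * a < L), hmt2a, if_neg (by omega)]
    · rw [psi_getElem_mtime hD (by omega : 2 * a + 1 < L), hmt2a1, if_pos (by omega)]

theorem ctun_eq_numHills_psi' (D : List Bool) (hD : IsDyck D) :
    ctun D = numHills (psi D) := by
  rw [ctun, tunEq, numHills, ctun_set_eq]
  have hset : {i : ℕ | ∃ X Y : List Bool, IsDyck X ∧ IsDyck Y ∧
      psi D = X ++ true :: false :: Y ∧ X.length = i} =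
      (fun a => 2 * a) '' {a : ℕ | Matched D a (D.length - 1 - a)} := by
    ext i
    simp only [Set.mem_setOf_eq, Set.mem_image]
    rw [hill_iff_tunnel hD]
    constructor
    · rintro ⟨a, rfl, hm⟩
      exact ⟨a, hm, rfl⟩
    · rintro ⟨a, hm, rfl⟩
      exact ⟨a, rfl, hm⟩
  rw [hset, Set.ncard_image_of_injective _ (fun x y h => by omega)]


/-- for every Dyck word `D`, `ct(D) = h(Ψ(D))`. -/
theorem ctun_eq_numHills_psi (D : List Bool) (hD : IsDyck D) :
    ctun D = numHills (psi D) := by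
  exact ctun_eq_numHills_psi' D hD

end DyckBij
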